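/- Define f₂ : [2,∞) → ℝ by s·f₂(s) = s − 3 log(s−1) + 3 log 3 − 4 for 2 ≤ s ≤ 4 and f₂(s) = 0 for s ≥ 4. Then f₂ satisfies the recursion s·f₂(s) = ∫_s^∞ f₁(t−1) dt for s ≥ 2, where f₁(s) = (3 − s)/s for 1 ≤ s ≤ 3 and f₁(s) = 0 for s > 3, and moreover f₂(s) ≤ 2e² · 0.33 · h(s) for all s ≥ 2. -/

import Mathlib

open Real

/-- The function `h(s)`: `e⁻²` for `1 ≤ s ≤ 2`, `e⁻ˢ` for `2 ≤ s ≤ 3`,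
and `3 s⁻¹ e⁻ˢ` for `s ≥ 3`. -/
noncomputable def hfun (s : ℝ) : ℝ :=
  if s ≤ 2 then Real.exp (-2) else if s ≤ 3 then Real.exp (-s) else 3 / s * Real.exp (-s)

/-- `f₁(s) = (3 - s)/s` for `1 ≤ s ≤ 3`, and `f₁(s) = 0` for `s > 3`. -/
noncomputable def fone (s : ℝ) : ℝ := if 1 ≤ s ∧ s ≤ 3 then (3 - s) / s else 0

/-- `f₂`, defined on `[2, ∞)` by `s f₂(s) = s - 3 log (s-1) + 3 log 3 - 4` for
`2 ≤ s ≤ 4` and `f₂(s) = 0` for `s ≥ 4`. -/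
noncomputable def ftwo (s : ℝ) : ℝ :=
  if s < 4 then (s - 3 * Real.log (s - 1) + 3 * Real.log 3 - 4) / s else 0

lemma log_three_lt : Real.log 3 < 1.104 := by
  rw [← Real.exp_lt_exp, Real.exp_log (by norm_num : (0:ℝ) < 3)]
  have h1 : (2.7182818283 : ℝ) < Real.exp 1 := Real.exp_one_gt_d9
  have h2 : (0.104 : ℝ) + 1 < Real.exp 0.104 :=
    Real.add_one_lt_exp (by norm_num : (0.104:ℝ) ≠ 0)
  have h3 : Real.exp 1 * Real.exp 0.104 = Real.exp 1.104 := by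
    rw [← Real.exp_add]; norm_num
  nlinarith [Real.exp_pos (1:ℝ), Real.exp_pos (0.104:ℝ)]

lemma exp_two_lt : Real.exp 2 < 7.39 := by
  have h1 : Real.exp 1 < 2.7182818286 := Real.exp_one_lt_d9
  have h2 : Real.exp 2 = Real.exp 1 * Real.exp 1 := by
    rw [← Real.exp_add]; norm_num
  nlinarith [Real.exp_pos (1:ℝ)]

lemma cubic_le_exp {u : ℝ} (hu : 0 ≤ u) :
    1 + u + u ^ 2 / 2 + u ^ 3 / 6 ≤ Real.exp u := by
  have h := Real.sum_le_exp_of_nonneg hu 4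
  refine le_trans (le_of_eq ?_) h
  simp [Finset.sum_range_succ, Nat.factorial]

/-- The comparison function for the interval `[2,3]`. -/
noncomputable def Dfun (x : ℝ) : ℝ :=
  0.66 * x * Real.exp (2 - x) - (x - 3 * Real.log (x - 1) + 3 * Real.log 3 - 4)

lemma Dfun_hasDerivAt {x : ℝ} (hx : 1 < x) :
    HasDerivAt Dfun (0.66 * (1 - x) * Real.exp (2 - x) - 1 + 3 / (x - 1)) x := by
  have hne : x - 1 ≠ 0 := by linarith
  have h1 : HasDerivAt (fun y : ℝ => 2 - y) (-1) x := (hasDerivAt_id x).const_sub 2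
  have h2 : HasDerivAt (fun y : ℝ => Real.exp (2 - y)) (Real.exp (2 - x) * (-1)) x := h1.exp
  have h3 : HasDerivAt (fun y : ℝ => 0.66 * y) 0.66 x := by
    simpa using (hasDerivAt_id x).const_mul 0.66
  have h4 := h3.mul h2
  have h5 : HasDerivAt (fun y : ℝ => y - 1) 1 x := (hasDerivAt_id x).sub_const 1
  have h6 : HasDerivAt (fun y : ℝ => Real.log (y - 1)) (1 / (x - 1)) x := by
    simpa using h5.log hne
  have h7 : HasDerivAt (fun y : ℝ => 3 * Real.log (y - 1)) (3 * (1 / (x - 1))) x :=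
    h6.const_mul 3
  have h8 : HasDerivAt (fun y : ℝ => y - 3 * Real.log (y - 1) + 3 * Real.log 3 - 4)
      (1 - 3 * (1 / (x - 1))) x := by
    simpa using (((hasDerivAt_id x).sub h7).add_const (3 * Real.log 3)).sub_const 4
  have := h4.sub h8
  convert this using 1
  case e'_8 => rfl
  case e'_9 => ring
  all_goals rfl

lemma Dfun_deriv_pos {x : ℝ} (hx2 : 2 < x) (hx3 : x < 3) :
    0 < 0.66 * (1 - x) * Real.exp (2 - x) - 1 + 3 / (x - 1) := by
  obtain ⟨u, hu⟩ : ∃ u, u = x - 2 := ⟨x - 2, rfl⟩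
  have hxu : x = u + 2 := by linarith
  have hu0 : 0 < u := by linarith
  have hu1 : u < 1 := by linarith
  obtain ⟨E, hE⟩ : ∃ E, E = Real.exp (2 - x) := ⟨_, rfl⟩
  have hEpos : 0 < E := hE ▸ Real.exp_pos _
  have hEu : E * Real.exp u = 1 := by
    rw [hE, hu, ← Real.exp_add]; norm_num
  obtain ⟨P, hP⟩ : ∃ P, P = 1 + u + u ^ 2 / 2 + u ^ 3 / 6 := ⟨_, rfl⟩
  have hPpos : 0 < P := by rw [hP]; positivity
  have hP1 : 1 ≤ P := by rw [hP]; nlinarith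
  have hPle : P ≤ Real.exp u := hP ▸ cubic_le_exp hu0.le
  have hEP : E * P ≤ 1 := by
    calc E * P ≤ E * Real.exp u := by nlinarith
    _ = 1 := hEu
  have hE_le : E ≤ 1 / P := by
    rw [le_div_iff₀ hPpos]; exact hEP
  -- polynomial inequality: 0.66 * (x-1)^2 < (4-x) * P
  have hpoly : 0.66 * (x - 1) ^ 2 < (4 - x) * P := by
    rw [hP, hxu]
    nlinarith [pow_lt_one₀ hu0.le hu1 (by norm_num : 2 ≠ 0),
      pow_lt_one₀ hu0.le hu1 (by norm_num : 3 ≠ 0),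
      pow_lt_one₀ hu0.le hu1 (by norm_num : 4 ≠ 0)]
  have hc : (0:ℝ) ≤ 0.66 * (x - 1) ^ 2 := by positivity
  have hkey : 0.66 * (x - 1) ^ 2 * E < 4 - x := by
    calc 0.66 * (x - 1) ^ 2 * E ≤ 0.66 * (x - 1) ^ 2 * (1 / P) :=
          mul_le_mul_of_nonneg_left hE_le hc
    _ = 0.66 * (x - 1) ^ 2 / P := by ring
    _ < 4 - x := by rw [div_lt_iff₀ hPpos]; linarith
  have hx1 : 0 < x - 1 := by linarith
  have hdiv : 3 / (x - 1) - 1 = (4 - x) / (x - 1) := by field_simp; ring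
  have h5 : 0.66 * (x - 1) * E < (4 - x) / (x - 1) := by
    rw [lt_div_iff₀ hx1]; nlinarith
  rw [← hE]
  nlinarith [h5, hdiv]

lemma Dfun_nonneg {s : ℝ} (hs2 : 2 ≤ s) (hs3 : s ≤ 3) : 0 ≤ Dfun s := by
  have hD2 : 0 ≤ Dfun 2 := by
    simp only [Dfun]
    norm_num
    nlinarith [log_three_lt]
  have hmono : StrictMonoOn Dfun (Set.Icc 2 3) := by
    apply strictMonoOn_of_deriv_pos (convex_Icc 2 3)
    · intro x hx
      exact (Dfun_hasDerivAt (by linarith [hx.1] : (1:ℝ) < x)).continuousAt.continuousWithinAt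
    · intro x hx
      rw [interior_Icc] at hx
      rw [(Dfun_hasDerivAt (by linarith [hx.1] : (1:ℝ) < x)).deriv]
      exact Dfun_deriv_pos hx.1 hx.2
  rcases eq_or_lt_of_le hs2 with h | h
  · rw [← h]; exact hD2
  · have := hmono (Set.mem_Icc.mpr ⟨le_refl 2, by norm_num⟩) (Set.mem_Icc.mpr ⟨hs2, hs3⟩) h
    linarith

lemma g_mono {s : ℝ} (hs3 : 3 ≤ s) (hs4 : s ≤ 4) :
    s - 3 * Real.log (s - 1) + 3 * Real.log 3 - 4 ≤ 3 * Real.log 3 - 3 * Real.log 2 - 1 := by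
  -- uses log y ≥ 1 - 1/y with y = (s-1)/2
  have hy : (0:ℝ) < (s - 1) / 2 := by linarith
  have hlog : 1 - ((s - 1) / 2)⁻¹ ≤ Real.log ((s - 1) / 2) :=
    Real.one_sub_inv_le_log_of_pos hy
  have hsplit : Real.log ((s - 1) / 2) = Real.log (s - 1) - Real.log 2 := by
    rw [Real.log_div (by linarith) (by norm_num)]
  have hs1 : (0:ℝ) < s - 1 := by linarith
  have hinv : ((s - 1) / 2)⁻¹ = 2 / (s - 1) := by field_simp
  rw [hsplit, hinv] at hlog
  have h1 : 1 - 2 / (s - 1) = (s - 3) / (s - 1) := by field_simp; ring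
  rw [h1] at hlog
  have h2 : (s - 3) / (s - 1) ≤ Real.log (s - 1) - Real.log 2 := hlog
  have h3 : (s - 3) - (s - 3) * 3 / (s - 1) ≤ 0 := by
    rw [sub_nonpos, le_div_iff₀ hs1]
    nlinarith
  have h4 : (s - 3) * 3 / (s - 1) = 3 * ((s - 3) / (s - 1)) := by ring
  nlinarith [h2, h3]

lemma g3_le : 3 * Real.log 3 - 3 * Real.log 2 - 1 ≤ 1.98 * Real.exp (-2) := by
  have h1 : Real.log 3 < 1.104 := log_three_lt
  have h2 : (0.6931471803 : ℝ) < Real.log 2 := Real.log_two_gt_d9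
  have h3 : Real.exp 2 < 7.39 := exp_two_lt
  have h4 : Real.exp (-2) = (Real.exp 2)⁻¹ := by rw [← Real.exp_neg]
  have h5 : (7.39:ℝ)⁻¹ < Real.exp (-2) := by
    rw [h4]
    exact inv_strictAnti₀ (Real.exp_pos 2) h3
  nlinarith

/-- `f₂` satisfies the recursion `s f₂(s) = ∫_s^∞ f₁(t-1) dt` for `s ≥ 2` and the
bound `f₂(s) ≤ 2 e² · 0.33 · h(s)` for all `s ≥ 2`. -/
theorem ftwo_recursion_and_bound :
    (∀ s : ℝ, 2 ≤ s → s * ftwo s = ∫ t in Set.Ioi s, fone (t - 1)) ∧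
    (∀ s : ℝ, 2 ≤ s → ftwo s ≤ 2 * Real.exp 2 * 0.33 * hfun s) := by
  constructor
  · intro s hs
    by_cases hs4 : s < 4
    · -- main case 2 ≤ s < 4
      have hind : Set.EqOn (fun t => fone (t - 1))
          (Set.indicator (Set.Ioc s 4) (fun t => (4 - t) / (t - 1))) (Set.Ioi s) := by
        intro t ht
        simp only [Set.mem_Ioi] at ht
        by_cases h4 : t ≤ 4
        · have : t ∈ Set.Ioc s 4 := ⟨ht, h4⟩
          rw [Set.indicator_of_mem this]
          simp only [fone]
          rw [if_pos ⟨by linarith, by linarith⟩,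
            show (3:ℝ) - (t - 1) = 4 - t from by ring]
        · have : t ∉ Set.Ioc s 4 := fun h => h4 h.2
          rw [Set.indicator_of_notMem this]
          simp only [fone]
          rw [if_neg]
          rintro ⟨-, h3⟩
          linarith
      rw [MeasureTheory.setIntegral_congr_fun measurableSet_Ioi hind,
        MeasureTheory.setIntegral_indicator measurableSet_Ioc]
      have hinter : Set.Ioi s ∩ Set.Ioc s 4 = Set.Ioc s 4 := by
        apply Set.inter_eq_self_of_subset_right
        exact fun t ht => ht.1
      rw [hinter, ← intervalIntegral.integral_of_le hs4.le]
      have hftc : ∫ t in s..4, (4 - t) / (t - 1) =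
          (3 * Real.log (4 - 1) - 4) - (3 * Real.log (s - 1) - s) := by
        refine intervalIntegral.integral_eq_sub_of_hasDerivAt
          (f := fun t => 3 * Real.log (t - 1) - t) ?_ ?_
        · intro t ht
          rw [Set.uIcc_of_le hs4.le] at ht
          have ht1 : (0:ℝ) < t - 1 := by linarith [ht.1]
          have h6 : HasDerivAt (fun y : ℝ => Real.log (y - 1)) (1 / (t - 1)) t := by
            simpa using ((hasDerivAt_id t).sub_const 1).log (by simp only [id_eq]; linarith)
          have := (h6.const_mul 3).sub (hasDerivAt_id t)
          convert this using 1
          · rfl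
          field_simp
          ring
        · apply ContinuousOn.intervalIntegrable
          apply ContinuousOn.div
          · fun_prop
          · fun_prop
          · intro t ht
            rw [Set.uIcc_of_le hs4.le] at ht
            have : (0:ℝ) < t - 1 := by linarith [ht.1]
            linarith
      rw [hftc]
      simp only [ftwo, if_pos hs4]
      have hsne : s ≠ 0 := by linarith
      field_simp
      ring
    · -- s ≥ 4 : both sides are zero
      push_neg at hs4
      have h1 : ftwo s = 0 := by simp [ftwo, not_lt.mpr hs4]
      rw [h1, mul_zero]
      symm
      apply MeasureTheory.setIntegral_eq_zero_of_forall_eq_zero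
      intro t ht
      simp only [Set.mem_Ioi] at ht
      simp only [fone]
      rw [if_neg]
      rintro ⟨-, h3⟩
      linarith
  · intro s hs
    by_cases hs3 : s ≤ 3
    · -- 2 ≤ s ≤ 3
      have hD := Dfun_nonneg hs hs3
      simp only [Dfun] at hD
      have hftwo : ftwo s = (s - 3 * Real.log (s - 1) + 3 * Real.log 3 - 4) / s := by
        simp [ftwo]; intro h; linarith
      have hspos : (0:ℝ) < s := by linarith
      have hle : ftwo s ≤ 0.66 * Real.exp (2 - s) := by
        rw [hftwo, div_le_iff₀ hspos]
        nlinarith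
      have hexp : Real.exp 2 * Real.exp (-s) = Real.exp (2 - s) := by
        rw [← Real.exp_add]; ring_nf
      by_cases hs2 : s ≤ 2
      · have hseq : s = 2 := le_antisymm hs2 hs
        simp only [hfun, if_pos hs2]
        rw [hseq] at hle ⊢
        rw [show (2:ℝ) - 2 = 0 from by norm_num, Real.exp_zero] at hle
        have h1 : Real.exp 2 * Real.exp (-2 : ℝ) = 1 := by
          rw [← Real.exp_add]; norm_num
        nlinarith
      · simp only [hfun, if_neg hs2, if_pos hs3]
        calc ftwo s ≤ 0.66 * Real.exp (2 - s) := hle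
        _ = 2 * Real.exp 2 * 0.33 * Real.exp (-s) := by rw [← hexp]; ring
    · push_neg at hs3
      have hs2 : ¬ s ≤ 2 := by linarith
      have hs3' : ¬ s ≤ 3 := not_le.mpr hs3
      simp only [hfun, if_neg hs2, if_neg hs3']
      by_cases hs4 : s < 4
      · -- 3 < s < 4
        have hg : s - 3 * Real.log (s - 1) + 3 * Real.log 3 - 4 ≤ 1.98 * Real.exp (-2) :=
          le_trans (g_mono hs3.le hs4.le) g3_le
        have hexp2 : Real.exp (-2 : ℝ) ≤ Real.exp (2 - s) := by
          apply Real.exp_le_exp.mpr; linarith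
        have hg2 : s - 3 * Real.log (s - 1) + 3 * Real.log 3 - 4 ≤ 1.98 * Real.exp (2 - s) := by
          nlinarith
        have hspos : (0:ℝ) < s := by linarith
        simp only [ftwo, if_pos hs4]
        rw [div_le_iff₀ hspos]
        have hexp : Real.exp 2 * Real.exp (-s) = Real.exp (2 - s) := by
          rw [← Real.exp_add]; ring_nf
        have : 2 * Real.exp 2 * 0.33 * (3 / s * Real.exp (-s)) * s
            = 1.98 * Real.exp (2 - s) := by
          rw [← hexp]; field_simp; ring
        rw [this]
        exact hg2
      · push_neg at hs4
        have : ftwo s = 0 := by simp [ftwo, not_lt.mpr hs4]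
        rw [this]
        have hspos : (0:ℝ) < s := by linarith
        positivity
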